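/- Under the stated factorization hypothesis, for all sufficiently large positive integers q, the order of vanishing at t = 0 of the real analytic function t ↦ f(β(t) + t^q, t^N) equals q·m + ord₀(h(β(t), t)), where ord₀ denotes the order of vanishing at t = 0. -/

import Mathlib

/-- `u` has order of vanishing `n` at `t = 0`: near `0`, `u t = t^n · v t` with `v`
analytic at `0` and `v 0 ≠ 0`. -/
def HasOrderAt (u : ℝ → ℝ) (n : ℕ) : Prop :=
  ∃ v : ℝ → ℝ, AnalyticAt ℝ v 0 ∧ v 0 ≠ 0 ∧ ∀ᶠ t in nhds (0:ℝ), u t = t ^ n * v t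

/-- An analytic function bounded by `C * |t|^n` near `0` factors as `t^n * w t`
with `w` analytic at `0`. -/
lemma factor_of_bound {u : ℝ → ℝ} (hu : AnalyticAt ℝ u 0) {C : ℝ} {n : ℕ}
    (hb : ∀ᶠ t in nhds (0:ℝ), |u t| ≤ C * |t| ^ n) :
    ∃ w : ℝ → ℝ, AnalyticAt ℝ w 0 ∧ ∀ᶠ t in nhds (0:ℝ), u t = t ^ n * w t := by
  by_cases hz : ∀ᶠ t in nhds (0:ℝ), u t = 0
  · exact ⟨0, analyticAt_const, hz.mono fun t ht => by simp [ht]⟩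
  · obtain ⟨j, g, hg, hg0, hgeq⟩ := hu.exists_eventuallyEq_pow_smul_nonzero_iff.mpr hz
    simp only [sub_zero, smul_eq_mul] at hgeq
    rcases le_or_gt n j with hle | hlt
    · refine ⟨fun t => t ^ (j - n) * g t,
        ((analyticAt_id.pow _).mul hg), ?_⟩
      filter_upwards [hgeq] with t ht
      rw [ht, ← mul_assoc, ← pow_add, Nat.add_sub_cancel' hle]
    · exfalso
      -- then |g t| ≤ C * |t|^(n-j) for t ≠ 0 near 0, forcing g 0 = 0
      have h1 : ∀ᶠ t in nhdsWithin (0:ℝ) {0}ᶜ, |g t| ≤ C * |t| ^ (n - j) := by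
        rw [eventually_nhdsWithin_iff]
        filter_upwards [hgeq, hb] with t ht hbt htne
        have htne' : (t:ℝ) ≠ 0 := htne
        have hpow : |t| ^ j ≠ 0 := pow_ne_zero _ (abs_ne_zero.mpr htne')
        have : |t| ^ j * |g t| ≤ C * (|t| ^ (n - j) * |t| ^ j) := by
          rw [← pow_add, Nat.sub_add_cancel hlt.le]
          calc |t| ^ j * |g t| = |u t| := by rw [ht, abs_mul, abs_pow]
            _ ≤ C * |t| ^ n := hbt
        have h2 : |g t| ≤ C * |t| ^ (n - j) := by
          have hpos : 0 < |t| ^ j := lt_of_le_of_ne (pow_nonneg (abs_nonneg _) _) (Ne.symm hpow)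
          nlinarith [hpos]
        exact h2
      have hlim : Filter.Tendsto (fun t => |g t|) (nhdsWithin (0:ℝ) {0}ᶜ) (nhds 0) := by
        have hupper : Filter.Tendsto (fun t : ℝ => C * |t| ^ (n - j)) (nhdsWithin (0:ℝ) {0}ᶜ)
            (nhds 0) := by
          have : Filter.Tendsto (fun t : ℝ => C * |t| ^ (n - j)) (nhds 0) (nhds (C * |0| ^ (n-j))) := by
            exact (Filter.Tendsto.const_mul C ((continuous_abs.tendsto 0).pow _))
          simpa [Nat.sub_ne_zero_of_lt hlt, zero_pow (Nat.sub_ne_zero_of_lt hlt)] using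
            this.mono_left nhdsWithin_le_nhds
        exact squeeze_zero' (Filter.Eventually.of_forall fun t => abs_nonneg _) h1 hupper
      have hg0' : Filter.Tendsto (fun t => |g t|) (nhdsWithin (0:ℝ) {0}ᶜ) (nhds (|g 0|)) :=
        ((continuous_abs.tendsto _).comp (hg.continuousAt)).mono_left nhdsWithin_le_nhds
      have : |g 0| = 0 := tendsto_nhds_unique hg0' hlim
      exact hg0 (abs_eq_zero.mp this)

/-- If `f(x, t^N) = (x − β(t))^m · h(x,t)` near the origin with `t ↦ h(β(t),t)` not
identically zero of order `k`, then for all sufficiently large `q`, the order of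
vanishing at `t = 0` of `t ↦ f(β(t) + t^q, t^N)` equals `q·m + k`. -/
theorem order_along_perturbed_root
    (f : ℝ × ℝ → ℝ) (hf : AnalyticAt ℝ f 0) (hf0 : f 0 = 0)
    (hfne : ¬ ∀ᶠ p in nhds (0 : ℝ × ℝ), f p = 0)
    (N : ℕ) (hN : 0 < N)
    (β : ℝ → ℝ) (hβ : AnalyticAt ℝ β 0) (hβ0 : β 0 = 0)
    (m : ℕ) (hm : 0 < m)
    (h : ℝ × ℝ → ℝ) (hh : AnalyticAt ℝ h 0)
    (hfactf : ∀ᶠ q in nhds (0 : ℝ × ℝ), f (q.1, q.2 ^ N) = (q.1 - β q.2) ^ m * h q)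
    (hhne : ¬ ∀ᶠ t in nhds (0:ℝ), h (β t, t) = 0)
    (k : ℕ) (hk : HasOrderAt (fun t => h (β t, t)) k) :
    ∃ q₀ : ℕ, ∀ q : ℕ, q₀ ≤ q →
      HasOrderAt (fun t => f (β t + t ^ q, t ^ N)) (q * m + k) := by
  obtain ⟨v, hv, hv0, hveq⟩ := hk
  -- h is Lipschitz on a neighborhood of 0
  obtain ⟨K, s, hs, hK⟩ := (hh.contDiffAt.of_le le_top : ContDiffAt ℝ 1 h 0).exists_lipschitzOnWith
  refine ⟨k + 2, fun q hq => ?_⟩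
  have hq1 : 1 ≤ q := le_trans (by omega) hq
  -- the curve t ↦ (β t + t^q, t) is analytic, sends 0 to (0,0)
  have hcurve : AnalyticAt ℝ (fun t : ℝ => (β t + t ^ q, t)) 0 :=
    (hβ.add (analyticAt_id.pow q)).prod analyticAt_id
  have hcurve0 : (fun t : ℝ => (β t + t ^ q, t)) 0 = (0, 0) := by
    simp [hβ0, zero_pow (by omega : q ≠ 0)]
  have hccont : ContinuousAt (fun t : ℝ => (β t + t ^ q, t)) 0 := hcurve.continuousAt
  have hcurve' : AnalyticAt ℝ (fun t : ℝ => (β t, t)) 0 := hβ.prod analyticAt_id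
  have hccont' : ContinuousAt (fun t : ℝ => (β t, t)) 0 := hcurve'.continuousAt
  have hcurve0' : (fun t : ℝ => (β t, t)) 0 = (0, 0) := by simp [hβ0]
  -- u_q : t ↦ h(β t + t^q, t) is analytic at 0
  have huq : AnalyticAt ℝ (fun t : ℝ => h (β t + t ^ q, t)) 0 := by
    have hcomp := AnalyticAt.comp (g := h) (x := (0:ℝ))
      (by simpa [hβ0, zero_pow (show q ≠ 0 by omega), Prod.mk_zero_zero] using hh) hcurve
    simpa [Function.comp_def] using hcomp
  have huinf : AnalyticAt ℝ (fun t : ℝ => h (β t, t)) 0 := by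
    have hcomp := AnalyticAt.comp (g := h) (x := (0:ℝ))
      (by simpa [hβ0, Prod.mk_zero_zero] using hh) hcurve'
    simpa [Function.comp_def] using hcomp
  -- the difference D is analytic and bounded by K * |t|^q ≤ K |t|^(k+1) near 0
  set D : ℝ → ℝ := fun t => h (β t + t ^ q, t) - h (β t, t) with hD
  have hDan : AnalyticAt ℝ D 0 := huq.sub huinf
  have hmem : ∀ᶠ t in nhds (0:ℝ), (β t + t ^ q, t) ∈ s ∧ (β t, t) ∈ s := by
    have h1 := hccont.preimage_mem_nhds (by simpa [hβ0, zero_pow (show q ≠ 0 by omega), Prod.mk_zero_zero] using hs)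
    have h2 := hccont'.preimage_mem_nhds (by simpa [hβ0, Prod.mk_zero_zero] using hs)
    filter_upwards [h1, h2] with t ht1 ht2 using ⟨ht1, ht2⟩
  have hDb : ∀ᶠ t in nhds (0:ℝ), |D t| ≤ (K : ℝ) * |t| ^ (k + 1) := by
    have hball : ∀ᶠ t in nhds (0:ℝ), |t| ≤ 1 := by
      have : Metric.closedBall (0:ℝ) 1 ∈ nhds (0:ℝ) := Metric.closedBall_mem_nhds 0 one_pos
      filter_upwards [this] with t ht
      simpa [Real.dist_eq] using ht
    filter_upwards [hmem, hball] with t ⟨ht1, ht2⟩ htb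
    have hd := hK.dist_le_mul _ ht1 _ ht2
    have hdist : dist ((β t + t ^ q, t) : ℝ × ℝ) (β t, t) = |t| ^ q := by
      rw [Prod.dist_eq]
      simp [Real.dist_eq, abs_pow]
    rw [Real.dist_eq] at hd
    have : |D t| ≤ (K : ℝ) * |t| ^ q := by simpa [hD, hdist] using hd
    refine this.trans ?_
    have : |t| ^ q ≤ |t| ^ (k + 1) :=
      pow_le_pow_of_le_one (abs_nonneg _) htb (by omega)
    have hK0 : (0:ℝ) ≤ K := K.2
    nlinarith
  obtain ⟨w, hw, hweq⟩ := factor_of_bound hDan hDb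
  -- v' := v + t * w  is the unit for u_q
  set v' : ℝ → ℝ := fun t => v t + t * w t with hv'
  have hv'an : AnalyticAt ℝ v' 0 := hv.add (analyticAt_id.mul hw)
  have hv'0 : v' 0 ≠ 0 := by simpa [hv'] using hv0
  have huqeq : ∀ᶠ t in nhds (0:ℝ), h (β t + t ^ q, t) = t ^ k * v' t := by
    filter_upwards [hveq, hweq] with t ht1 ht2
    have : h (β t + t ^ q, t) = h (β t, t) + D t := by simp [hD]
    rw [this, ht1, ht2, hv']
    ring
  -- pull back the factorization of f along the curve
  have hfact' : ∀ᶠ t in nhds (0:ℝ),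
      f (β t + t ^ q, t ^ N) = (t ^ q) ^ m * h (β t + t ^ q, t) := by
    have hpre := hccont.preimage_mem_nhds (by simpa [hβ0, zero_pow (show q ≠ 0 by omega), Prod.mk_zero_zero, Filter.Eventually] using hfactf)
    filter_upwards [hpre] with t ht
    have := ht
    simp only [Set.mem_preimage] at this
    simpa using this
  refine ⟨v', hv'an, hv'0, ?_⟩
  filter_upwards [hfact', huqeq] with t ht1 ht2
  rw [ht1, ht2, ← pow_mul, ← mul_assoc, ← pow_add]
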